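/- Let λ ∈ ℂ with |λ| = 1, let k < l be positive integers, and let γ = diag(J(λ,k), J(λ,l)) be the (k+l)×(k+l) block-diagonal matrix. Then (1 / C(m, l-1)) · γ^m converges entrywise as m → ∞ to a matrix whose only nonzero entry is in position (k+1, k+l) and has modulus 1 in the limit (more precisely, all other entries tend to 0 and the (k+1, k+l)-entry has modulus tending to 1). -/

import Mathlib

open Filter Topology

/-- The `k × k` upper-triangular Jordan block with eigenvalue `lam`. -/
def jordanBlock (lam : ℂ) (k : ℕ) : Matrix (Fin k) (Fin k) ℂ :=
  fun i j => if (j : ℕ) = (i : ℕ) then lam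
    else if (j : ℕ) = (i : ℕ) + 1 then 1 else 0

lemma jb_split (lam : ℂ) (k : ℕ) (r j : Fin k) :
    jordanBlock lam k r j =
      (if (j : ℕ) = (r : ℕ) then lam else 0) +
      (if (j : ℕ) = (r : ℕ) + 1 then 1 else 0) := by
  unfold jordanBlock
  split_ifs with h1 h2 <;> simp_all

lemma key_arith (lam : ℂ) (m iv jv : ℕ) :
    (if iv ≤ jv then ((m+1).choose (jv-iv) : ℂ) * lam^(m+1-(jv-iv)) else 0)
    = (if iv ≤ jv then (m.choose (jv-iv) : ℂ) * lam^(m-(jv-iv)) else 0) * lam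
      + (if 1 ≤ jv then
          (if iv ≤ jv-1 then (m.choose (jv-1-iv) : ℂ) * lam^(m-(jv-1-iv)) else 0)
         else 0) := by
  rcases lt_trichotomy iv jv with h | h | h
  · have h1 : 1 ≤ jv := by omega
    have h2 : iv ≤ jv - 1 := by omega
    rw [if_pos h.le, if_pos h.le, if_pos h1, if_pos h2]
    set d := jv - iv with hd
    have hd1 : 1 ≤ d := by omega
    have hjd : jv - 1 - iv = d - 1 := by omega
    rw [hjd]
    rcases le_or_gt d m with hdm | hdm
    · have e1 : m + 1 - d = (m - d) + 1 := by omega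
      have e2 : m - (d - 1) = (m - d) + 1 := by omega
      have e3 : (m+1).choose d = m.choose (d-1) + m.choose d := by
        have := Nat.choose_succ_succ' m (d-1)
        rw [show d - 1 + 1 = d by omega] at this
        omega
      rw [e1, e2, e3]
      push_cast
      ring
    · rcases eq_or_lt_of_le (show m + 1 ≤ d by omega) with hdm1 | hdm1
      · rw [← hdm1, Nat.choose_self, Nat.choose_succ_self, Nat.sub_self,
          show m + 1 - 1 = m by omega, Nat.sub_self, Nat.choose_self]
        push_cast
        ring
      · rw [Nat.choose_eq_zero_of_lt (by omega),
          Nat.choose_eq_zero_of_lt (by omega),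
          Nat.choose_eq_zero_of_lt (by omega)]
        push_cast
        ring
  · subst h
    simp only [le_refl, if_pos, Nat.sub_self, Nat.choose_zero_right, Nat.cast_one, one_mul,
      Nat.sub_zero]
    have : (if 1 ≤ iv then
        (if iv ≤ iv - 1 then (m.choose (iv-1-iv) : ℂ) * lam^(m-(iv-1-iv)) else 0)
        else 0) = 0 := by
      split_ifs with h1 h2
      · omega
      · rfl
      · rfl
    rw [this, add_zero, ← pow_succ]
  · rw [if_neg (by omega), if_neg (by omega)]
    split_ifs with h1 h2
    · omega
    · simp
    · simp

lemma jb_pow (lam : ℂ) (k : ℕ) (m : ℕ) (i j : Fin k) :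
    (jordanBlock lam k ^ m) i j =
      if (i : ℕ) ≤ (j : ℕ) then
        (m.choose ((j : ℕ) - (i : ℕ)) : ℂ) * lam ^ (m - ((j : ℕ) - (i : ℕ)))
      else 0 := by
  induction m generalizing j with
  | zero =>
    simp only [pow_zero, Matrix.one_apply, Nat.choose_zero_right]
    split_ifs with h1 h2 h2
    · have : (j : ℕ) - (i : ℕ) = 0 := by
        have := Fin.val_eq_val i j
        omega
      simp [this]
    · exact ((h2 : ¬ (i:ℕ) ≤ (j:ℕ)) (by rw [h1])).elim
    · have hij : (j : ℕ) ≠ (i : ℕ) := fun hc => h1 (Fin.ext hc.symm)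
      rw [Nat.choose_eq_zero_of_lt (by omega)]
      simp
    · rfl
  | succ n ih =>
    rw [pow_succ, Matrix.mul_apply]
    simp only [jb_split lam k _ j, mul_add]
    rw [Finset.sum_add_distrib]
    have s1 : (∑ r, (jordanBlock lam k ^ n) i r * (if (j:ℕ) = (r:ℕ) then lam else 0))
        = (jordanBlock lam k ^ n) i j * lam := by
      rw [Finset.sum_eq_single j]
      · rw [if_pos rfl]
      · intro b _ hb
        rw [if_neg (fun hc => hb (Fin.ext hc.symm)), mul_zero]
      · intro hj; exact absurd (Finset.mem_univ j) hj
    rw [s1, ih]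
    have key := key_arith lam n (i : ℕ) (j : ℕ)
    rcases Nat.eq_zero_or_pos (j : ℕ) with hj0 | hj0
    · have s2 : (∑ r, (jordanBlock lam k ^ n) i r *
          (if (j:ℕ) = (r:ℕ)+1 then 1 else 0)) = 0 := by
        apply Finset.sum_eq_zero
        intro r _
        rw [if_neg (by omega), mul_zero]
      rw [s2, key, if_neg (show ¬ (1 ≤ (j:ℕ)) by omega), add_zero]
    · have hjk : (j : ℕ) - 1 < k := by omega
      have s2 : (∑ r, (jordanBlock lam k ^ n) i r * (if (j:ℕ) = (r:ℕ)+1 then 1 else 0))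
          = (jordanBlock lam k ^ n) i ⟨(j:ℕ)-1, hjk⟩ := by
        rw [Finset.sum_eq_single (⟨(j:ℕ)-1, hjk⟩ : Fin k)]
        · rw [if_pos (show (j:ℕ) = (j:ℕ) - 1 + 1 by omega), mul_one]
        · intro b _ hb
          rw [if_neg (fun hc => hb (Fin.ext (show (b:ℕ) = (j:ℕ) - 1 by omega))), mul_zero]
        · intro hj; exact absurd (Finset.mem_univ _) hj
      rw [s2, ih, key, if_pos (show 1 ≤ (j:ℕ) from hj0)]

lemma choose_mono_left' {m a : ℕ} : ∀ b, a ≤ b → b ≤ m / 2 → m.choose a ≤ m.choose b := by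
  intro b
  induction b with
  | zero => intro h _; interval_cases a; rfl
  | succ b ih =>
    intro hab hb
    rcases Nat.lt_or_ge a (b+1) with h | h
    · exact (ih (by omega) (by omega)).trans
        (Nat.choose_le_succ_of_lt_half_left (by omega))
    · have : a = b + 1 := by omega
      rw [this]

lemma choose_ratio_tendsto (d e : ℕ) (hde : d < e) :
    Tendsto (fun m : ℕ => (m.choose d : ℝ) / m.choose e) atTop (𝓝 0) := by
  apply squeeze_zero' (g := fun m : ℕ => (2 * e : ℝ) / m)
  · filter_upwards with m
    positivity
  · filter_upwards [eventually_ge_atTop (2 * e)] with m hm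
    have he : 1 ≤ e := by omega
    have hm0 : 0 < m := by omega
    have hce : 0 < m.choose e := Nat.choose_pos (by omega)
    have h1 : m.choose d ≤ m.choose (e - 1) :=
      choose_mono_left' (e - 1) (by omega) (by omega)
    have hident : m.choose (e-1) * (m - e + 1) = m.choose e * e := by
      have := Nat.choose_succ_right_eq m (e-1)
      rw [show e - 1 + 1 = e by omega, show m - (e-1) = m - e + 1 by omega] at this
      omega
    have hnat : m.choose d * m ≤ 2 * e * m.choose e := by
      calc m.choose d * m ≤ m.choose (e-1) * (2 * (m - e + 1)) :=
            Nat.mul_le_mul h1 (by omega)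
        _ = 2 * (m.choose (e-1) * (m - e + 1)) := by ring
        _ = 2 * (m.choose e * e) := by rw [hident]
        _ = 2 * e * m.choose e := by ring
    rw [div_le_div_iff₀ (by exact_mod_cast hce) (by exact_mod_cast hm0)]
    exact_mod_cast hnat
  · exact tendsto_const_div_atTop_nhds_zero_nat _

lemma aux0 (lam : ℂ) (hlam : ‖lam‖ = 1) {d e : ℕ} (hde : d < e) :
    Tendsto (fun m : ℕ => (1 / (m.choose e : ℂ)) * ((m.choose d : ℂ) * lam ^ (m - d)))
      atTop (𝓝 0) := by
  rw [tendsto_zero_iff_norm_tendsto_zero]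
  have hnl : ‖lam‖ = 1 := hlam
  have heq : ∀ m : ℕ, ‖(1 / (m.choose e : ℂ)) * ((m.choose d : ℂ) * lam ^ (m - d))‖
      = (m.choose d : ℝ) / m.choose e := by
    intro m
    rw [norm_mul, norm_mul, norm_div, norm_one, norm_pow, hnl, one_pow, mul_one,
      Complex.norm_natCast, Complex.norm_natCast]
    ring
  exact (choose_ratio_tendsto d e hde).congr (fun m => (heq m).symm)

lemma fromBlocks_pow' {k l : ℕ} (A : Matrix (Fin k) (Fin k) ℂ) (B : Matrix (Fin l) (Fin l) ℂ)
    (m : ℕ) : (Matrix.fromBlocks A 0 0 B) ^ m = Matrix.fromBlocks (A ^ m) 0 0 (B ^ m) := by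
  induction m with
  | zero => simp [Matrix.fromBlocks_one]
  | succ n ih =>
    rw [pow_succ, pow_succ, pow_succ, ih, Matrix.fromBlocks_multiply]
    simp

/-- for `γ = diag(J(λ,k), J(λ,l))` with `|λ| = 1` and `k < l`,
in `(1 / C(m, l-1)) γ^m` all entries except the one in position `(k+1, k+l)`
tend to `0`, while that entry has modulus tending to `1`. -/
theorem parabolic_two_blocks_normalized_pow (lam : ℂ)
    (hlam : ‖lam‖ = 1) (k l : ℕ) (hk : 0 < k) (hkl : k < l)
    (γ : Matrix (Fin k ⊕ Fin l) (Fin k ⊕ Fin l) ℂ)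
    (hγ : γ = Matrix.fromBlocks (jordanBlock lam k) 0 0 (jordanBlock lam l)) :
    (∀ p q : Fin k ⊕ Fin l,
      (p, q) ≠ (Sum.inr ⟨0, by omega⟩, Sum.inr ⟨l - 1, by omega⟩) →
      Tendsto (fun m : ℕ => (1 / (m.choose (l - 1) : ℂ)) * ((γ ^ m) p q))
        atTop (𝓝 0)) ∧
    Tendsto (fun m : ℕ =>
        ‖(1 / (m.choose (l - 1) : ℂ)) *
          ((γ ^ m) (Sum.inr ⟨0, by omega⟩) (Sum.inr ⟨l - 1, by omega⟩))‖)
      atTop (𝓝 1) := by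
  subst hγ
  constructor
  · rintro (i | i) (j | j) hpq
    · simp only [fromBlocks_pow', Matrix.fromBlocks_apply₁₁, jb_pow]
      by_cases hij : (i : ℕ) ≤ (j : ℕ)
      · simp only [if_pos hij]
        have hj : (j : ℕ) < k := j.isLt
        exact aux0 lam hlam (show (j:ℕ) - (i:ℕ) < l - 1 by omega)
      · simp only [if_neg hij, mul_zero]
        exact tendsto_const_nhds
    · simp only [fromBlocks_pow', Matrix.fromBlocks_apply₁₂, Matrix.zero_apply, mul_zero]
      exact tendsto_const_nhds
    · simp only [fromBlocks_pow', Matrix.fromBlocks_apply₂₁, Matrix.zero_apply, mul_zero]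
      exact tendsto_const_nhds
    · have hij' : ¬ ((i:ℕ) = 0 ∧ (j:ℕ) = l - 1) := by
        rintro ⟨h1, h2⟩
        exact hpq (Prod.ext (congrArg Sum.inr (Fin.ext h1))
          (congrArg Sum.inr (Fin.ext h2)))
      simp only [fromBlocks_pow', Matrix.fromBlocks_apply₂₂, jb_pow]
      by_cases hij : (i : ℕ) ≤ (j : ℕ)
      · simp only [if_pos hij]
        have hj : (j : ℕ) < l := j.isLt
        exact aux0 lam hlam (show (j:ℕ) - (i:ℕ) < l - 1 by omega)
      · simp only [if_neg hij, mul_zero]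
        exact tendsto_const_nhds
  · have hev : ∀ᶠ m : ℕ in atTop,
        (1 : ℝ) = ‖(1 / (m.choose (l - 1) : ℂ)) *
          (((Matrix.fromBlocks (jordanBlock lam k) 0 0 (jordanBlock lam l)) ^ m)
            (Sum.inr ⟨0, by omega⟩) (Sum.inr ⟨l - 1, by omega⟩))‖ := by
      filter_upwards [eventually_ge_atTop (l - 1)] with m hm
      have hc : 0 < m.choose (l - 1) := Nat.choose_pos hm
      rw [fromBlocks_pow', Matrix.fromBlocks_apply₂₂, jb_pow,
        if_pos (show ((⟨0, by omega⟩ : Fin l) : ℕ) ≤ ((⟨l - 1, by omega⟩ : Fin l) : ℕ)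
          by simp)]
      have hval : ((⟨l - 1, by omega⟩ : Fin l) : ℕ) - ((⟨0, by omega⟩ : Fin l) : ℕ)
          = l - 1 := by simp
      rw [hval, norm_mul, norm_mul, norm_div, norm_one, norm_pow, hlam, one_pow, mul_one,
        Complex.norm_natCast]
      field_simp
    exact tendsto_const_nhds.congr' hev
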